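/- arXiv:math/0605624 — 2 statements merged into one kernel-verified Lean document; each statement's English description precedes it below -/
import Mathlib

section
/- There exists a constant C_0 > 0, independent of all parameters, such that for all integers m ≥ 0 and all even integers l ≥ 0 with s := m + l/2 ≥ 1, one has T_{m,l} ≤ (l + 1) exp(−C_0 l²/s) T_{s,0}. -/
open Finset

noncomputable section

/-- The height after `t` steps of the walk with up (`true`) / down (`false`) step sequence
`ε`; each trajectory `x ∈ 𝒯_{m,l}` is identified with its sequence of `±1` steps, and
`heightF ε t = x(t)`. -/
def heightF {L : ℕ} (ε : Fin L → Bool) (t : ℕ) : ℤ :=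
  ∑ s ∈ Finset.range t, if h : s < L then (if ε ⟨s, h⟩ then 1 else -1) else 0

open scoped Classical in
/-- The set `𝒯_{m,l}` of trajectories of a simple walk of length `L = l + 2m` on the
nonnegative half-lattice, starting at `0` and ending at level `l` (hence with `l + m` up
steps and `m` down steps), identified with their step sequences. -/
def trajFinset (m l : ℕ) : Finset (Fin (l + 2 * m) → Bool) :=
  Finset.univ.filter (fun ε =>
    heightF ε (l + 2 * m) = l ∧ ∀ t ≤ l + 2 * m, 0 ≤ heightF ε t)

/-- `T_{m,l}`, the number of trajectories in `𝒯_{m,l}`. -/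
def T (m l : ℕ) : ℕ := (trajFinset m l).card


namespace Walk

variable {L : ℕ}

lemma heightF_zero (ε : Fin L → Bool) : heightF ε 0 = 0 := by simp [heightF]

lemma heightF_succ (ε : Fin L → Bool) (t : ℕ) :
    heightF ε (t + 1) =
      heightF ε t + (if h : t < L then (if ε ⟨t, h⟩ then 1 else -1) else 0) := by
  simp [heightF, Finset.sum_range_succ]

lemma heightF_succ_lb (ε : Fin L → Bool) (t : ℕ) :
    heightF ε t - 1 ≤ heightF ε (t + 1) := by
  rw [heightF_succ]
  split <;> [skip; omega]
  split <;> omega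

lemma heightF_succ_ub (ε : Fin L → Bool) (t : ℕ) :
    heightF ε (t + 1) ≤ heightF ε t + 1 := by
  rw [heightF_succ]
  split <;> [skip; omega]
  split <;> omega

/-- Flip all steps strictly before time `c`. -/
def flipBefore (c : ℕ) (ε : Fin L → Bool) : Fin L → Bool :=
  fun i => if (i : ℕ) < c then !ε i else ε i

lemma flipBefore_flipBefore (c : ℕ) (ε : Fin L → Bool) :
    flipBefore c (flipBefore c ε) = ε := by
  funext i
  simp only [flipBefore]
  split <;> simp

lemma heightF_flipBefore_of_le (c : ℕ) (ε : Fin L → Bool) {t : ℕ} (ht : t ≤ c) :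
    heightF (flipBefore c ε) t = - heightF ε t := by
  unfold heightF
  rw [← Finset.sum_neg_distrib]
  refine Finset.sum_congr rfl fun s hs => ?_
  have hsc : s < c := lt_of_lt_of_le (Finset.mem_range.mp hs) ht
  split
  · simp only [flipBefore, hsc, if_pos]
    cases h : ε ⟨s, by assumption⟩ <;> simp [h]
  · simp

lemma heightF_flipBefore_of_ge (c : ℕ) (ε : Fin L → Bool) {t : ℕ} (ht : c ≤ t) :
    heightF (flipBefore c ε) t = heightF ε t - 2 * heightF ε c := by
  have key : ∀ δ : Fin L → Bool,
      heightF δ t = heightF δ c +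
        ∑ s ∈ Finset.Ico c t, (if h : s < L then (if δ ⟨s, h⟩ then (1:ℤ) else -1) else 0) := by
    intro δ
    unfold heightF
    rw [Finset.range_eq_Ico, Finset.range_eq_Ico]
    exact (Finset.sum_Ico_consecutive (fun s => if h : s < L then (if δ ⟨s, h⟩ then (1:ℤ) else -1) else 0) (Nat.zero_le c) ht).symm
  rw [key, key ε, heightF_flipBefore_of_le c ε le_rfl]
  have : ∀ s ∈ Finset.Ico c t,
      (if h : s < L then (if flipBefore c ε ⟨s, h⟩ then (1:ℤ) else -1) else 0) =
      (if h : s < L then (if ε ⟨s, h⟩ then (1:ℤ) else -1) else 0) := by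
    intro s hs
    have : ¬ (s < c) := by
      have := (Finset.mem_Ico.mp hs).1; omega
    split
    · simp [flipBefore, this]
    · rfl
  rw [Finset.sum_congr rfl this]
  ring

/-- number of down-steps -/
def Fc (ε : Fin L → Bool) : ℕ := (Finset.univ.filter fun i => ε i = false).card

lemma heightF_last (ε : Fin L → Bool) : heightF ε L = (L : ℤ) - 2 * (Fc ε : ℤ) := by
  have h1 : heightF ε L = ∑ i : Fin L, (if ε i then (1:ℤ) else -1) := by
    rw [heightF, ← Fin.sum_univ_eq_sum_range
      (fun s => if h : s < L then (if ε ⟨s, h⟩ then (1:ℤ) else -1) else 0) L]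
    refine Finset.sum_congr rfl fun i _ => ?_
    rw [dif_pos i.isLt]
  have h2 : ∀ i : Fin L, (if ε i then (1:ℤ) else -1) =
      1 - 2 * (if ε i = false then (1:ℤ) else 0) := by
    intro i; cases h : ε i <;> simp [h]
  rw [h1, Finset.sum_congr rfl (fun i _ => h2 i), Finset.sum_sub_distrib,
    Finset.sum_const, ← Finset.mul_sum, Finset.sum_boole]
  simp [Fc]

lemma card_Fc_eq (L k : ℕ) :
    (Finset.univ.filter fun ε : Fin L → Bool => Fc ε = k).card = L.choose k := by
  have := Finset.card_powersetCard k (Finset.univ : Finset (Fin L))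
  rw [Finset.card_univ, Fintype.card_fin] at this
  rw [← this]
  refine Finset.card_bij' (fun ε _ => Finset.univ.filter fun i => ε i = false)
    (fun S _ => fun i => decide (i ∉ S)) ?_ ?_ ?_ ?_
  · intro ε hε
    rw [Finset.mem_powersetCard]
    exact ⟨Finset.subset_univ _, by simpa [Fc] using (Finset.mem_filter.mp hε).2⟩
  · intro S hS
    rw [Finset.mem_powersetCard] at hS
    simp only [Finset.mem_filter, Finset.mem_univ, true_and]
    rw [← hS.2]
    unfold Fc
    congr 1
    ext i
    simp
  · intro ε hε
    funext i
    simp only [Finset.mem_filter, Finset.mem_univ, true_and]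
    cases h : ε i <;> simp [h]
  · intro S hS
    ext i
    simp


lemma firstNeg (ε : Fin L → Bool) (h : ∃ t, t ≤ L ∧ heightF ε t < 0) :
    Nat.find h ≤ L ∧ heightF ε (Nat.find h) = -1 ∧
      ∀ t < Nat.find h, 0 ≤ heightF ε t := by
  obtain ⟨hcL, hneg⟩ := Nat.find_spec h
  have hmin : ∀ t < Nat.find h, 0 ≤ heightF ε t := by
    intro t htc
    have := Nat.find_min h htc
    push_neg at this
    exact this (le_trans (le_of_lt htc) hcL)
  refine ⟨hcL, ?_, hmin⟩
  have hc0 : Nat.find h ≠ 0 := by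
    intro h0
    rw [h0, heightF_zero] at hneg
    omega
  have h1 : 0 ≤ heightF ε (Nat.find h - 1) := hmin _ (by omega)
  have h2 := heightF_succ_lb ε (Nat.find h - 1)
  have h3 : Nat.find h - 1 + 1 = Nat.find h := by omega
  rw [h3] at h2
  omega

lemma firstPos (ε : Fin L → Bool) (h : ∃ t, t ≤ L ∧ 0 < heightF ε t) :
    Nat.find h ≤ L ∧ heightF ε (Nat.find h) = 1 ∧
      ∀ t < Nat.find h, heightF ε t ≤ 0 := by
  obtain ⟨hcL, hpos⟩ := Nat.find_spec h
  have hmin : ∀ t < Nat.find h, heightF ε t ≤ 0 := by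
    intro t htc
    have := Nat.find_min h htc
    push_neg at this
    exact this (le_trans (le_of_lt htc) hcL)
  refine ⟨hcL, ?_, hmin⟩
  have hc0 : Nat.find h ≠ 0 := by
    intro h0
    rw [h0, heightF_zero] at hpos
    omega
  have h1 : heightF ε (Nat.find h - 1) ≤ 0 := hmin _ (by omega)
  have h2 := heightF_succ_ub ε (Nat.find h - 1)
  have h3 : Nat.find h - 1 + 1 = Nat.find h := by omega
  rw [h3] at h2
  omega

open scoped Classical in
def Phi (ε : Fin L → Bool) : Fin L → Bool :=
  if h : ∃ t, t ≤ L ∧ heightF ε t < 0 then flipBefore (Nat.find h) ε else ε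

open scoped Classical in
def Psi (η : Fin L → Bool) : Fin L → Bool :=
  if h : ∃ t, t ≤ L ∧ 0 < heightF η t then flipBefore (Nat.find h) η else η

lemma Phi_spec (ε : Fin L → Bool) (h : ∃ t, t ≤ L ∧ heightF ε t < 0) :
    heightF (Phi ε) L = heightF ε L + 2 ∧ Psi (Phi ε) = ε := by
  classical
  obtain ⟨hcL, hc1, hmin⟩ := firstNeg ε h
  set c := Nat.find h with hcdef
  have hPhi : Phi ε = flipBefore c ε := dif_pos h
  have hend : heightF (Phi ε) L = heightF ε L + 2 := by
    rw [hPhi, heightF_flipBefore_of_ge c ε hcL, hc1]; ring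
  have hatc : heightF (Phi ε) c = 1 := by
    rw [hPhi, heightF_flipBefore_of_le c ε le_rfl, hc1]; ring
  have hex : ∃ t, t ≤ L ∧ 0 < heightF (Phi ε) t := ⟨c, hcL, by rw [hatc]; norm_num⟩
  have hfind : Nat.find hex = c := by
    refine le_antisymm (Nat.find_le ⟨hcL, by rw [hatc]; norm_num⟩) ?_
    by_contra hlt
    push_neg at hlt
    obtain ⟨-, hv, -⟩ := firstPos (Phi ε) hex
    generalize hn : Nat.find hex = n at hv hlt
    have h1 : 0 ≤ heightF ε n := hmin _ hlt
    have h2 : heightF (flipBefore c ε) n = - heightF ε n :=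
      heightF_flipBefore_of_le c ε (le_of_lt hlt)
    rw [hPhi] at hv
    omega
  refine ⟨hend, ?_⟩
  rw [Psi, dif_pos hex, hfind, hPhi, flipBefore_flipBefore]

lemma Psi_spec (η : Fin L → Bool) (h : ∃ t, t ≤ L ∧ 0 < heightF η t) :
    heightF (Psi η) L = heightF η L - 2 ∧
      (∃ t, t ≤ L ∧ heightF (Psi η) t < 0) ∧ Phi (Psi η) = η := by
  classical
  obtain ⟨hcL, hc1, hmin⟩ := firstPos η h
  set c := Nat.find h with hcdef
  have hPsi : Psi η = flipBefore c η := dif_pos h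
  have hend : heightF (Psi η) L = heightF η L - 2 := by
    rw [hPsi, heightF_flipBefore_of_ge c η hcL, hc1]; ring
  have hatc : heightF (Psi η) c = -1 := by
    rw [hPsi, heightF_flipBefore_of_le c η le_rfl, hc1]
  have hex : ∃ t, t ≤ L ∧ heightF (Psi η) t < 0 := ⟨c, hcL, by rw [hatc]; norm_num⟩
  have hfind : Nat.find hex = c := by
    refine le_antisymm (Nat.find_le ⟨hcL, by rw [hatc]; norm_num⟩) ?_
    by_contra hlt
    push_neg at hlt
    obtain ⟨-, hv, -⟩ := firstNeg (Psi η) hex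
    generalize hn : Nat.find hex = n at hv hlt
    have h1 : heightF η n ≤ 0 := hmin _ hlt
    have h2 : heightF (flipBefore c η) n = - heightF η n :=
      heightF_flipBefore_of_le c η (le_of_lt hlt)
    rw [hPsi] at hv
    omega
  refine ⟨hend, hex, ?_⟩
  rw [Phi, dif_pos hex, hfind, hPsi, flipBefore_flipBefore]

end Walk

namespace Walk

open scoped Classical

lemma T_eq (m l : ℕ) :
    T m l = (((Finset.univ.filter fun ε : Fin (l + 2 * m) → Bool => Fc ε = m)).filter
      (fun ε => ∀ t ≤ l + 2 * m, 0 ≤ heightF ε t)).card := by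
  unfold T trajFinset
  congr 1
  rw [Finset.filter_filter]
  apply Finset.filter_congr
  intro ε _
  have hl := heightF_last ε
  constructor
  · rintro ⟨h1, h2⟩
    refine ⟨?_, h2⟩
    rw [h1] at hl
    push_cast at hl
    omega
  · rintro ⟨h1, h2⟩
    refine ⟨?_, h2⟩
    rw [h1] at hl
    push_cast at hl
    omega

lemma bad_card (m l : ℕ) :
    (((Finset.univ.filter fun ε : Fin (l + 2 * (m + 1)) → Bool => Fc ε = m + 1)).filter
      (fun ε => ¬ ∀ t ≤ l + 2 * (m + 1), 0 ≤ heightF ε t)).card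
    = (l + 2 * (m + 1)).choose m := by
  set L := l + 2 * (m + 1) with hL
  rw [← card_Fc_eq L m]
  have hmem : ∀ ε : Fin L → Bool,
      ε ∈ ((Finset.univ.filter fun ε : Fin L → Bool => Fc ε = m + 1)).filter
        (fun ε => ¬ ∀ t ≤ L, 0 ≤ heightF ε t) ↔
      Fc ε = m + 1 ∧ ∃ t, t ≤ L ∧ heightF ε t < 0 := by
    intro ε
    simp only [Finset.mem_filter, Finset.mem_univ, true_and]
    constructor
    · rintro ⟨h1, h2⟩
      push_neg at h2
      obtain ⟨t, ht1, ht2⟩ := h2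
      exact ⟨h1, t, ht1, by omega⟩
    · rintro ⟨h1, t, ht1, ht2⟩
      exact ⟨h1, by push_neg; exact ⟨t, ht1, by omega⟩⟩
  refine Finset.card_bij' (fun ε _ => Phi ε) (fun η _ => Psi η) ?_ ?_ ?_ ?_
  · intro ε hε
    obtain ⟨h1, hex⟩ := (hmem ε).mp hε
    obtain ⟨hend, -⟩ := Phi_spec ε hex
    simp only [Finset.mem_filter, Finset.mem_univ, true_and]
    have hl1 := heightF_last ε
    have hl2 := heightF_last (Phi ε)
    rw [hl1, hl2] at hend
    have : (Fc (Phi ε) : ℤ) = (m : ℤ) := by push_cast [h1] at hend ⊢; omega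
    exact_mod_cast this
  · intro η hη
    simp only [Finset.mem_filter, Finset.mem_univ, true_and] at hη
    have hpos : ∃ t, t ≤ L ∧ 0 < heightF η t := by
      refine ⟨L, le_rfl, ?_⟩
      rw [heightF_last, hη]
      omega
    obtain ⟨hend, hex, -⟩ := Psi_spec η hpos
    rw [hmem]
    refine ⟨?_, hex⟩
    have hl1 := heightF_last η
    have hl2 := heightF_last (Psi η)
    rw [hl1, hl2] at hend
    have : (Fc (Psi η) : ℤ) = (m : ℤ) + 1 := by push_cast [hη] at hend ⊢; omega
    exact_mod_cast this
  · intro ε hε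
    obtain ⟨-, hex⟩ := (hmem ε).mp hε
    exact (Phi_spec ε hex).2
  · intro η hη
    simp only [Finset.mem_filter, Finset.mem_univ, true_and] at hη
    have hpos : ∃ t, t ≤ L ∧ 0 < heightF η t := by
      refine ⟨L, le_rfl, ?_⟩
      rw [heightF_last, hη]
      omega
    exact (Psi_spec η hpos).2.2

lemma T_add (m l : ℕ) :
    T (m + 1) l + (l + 2 * (m + 1)).choose m = (l + 2 * (m + 1)).choose (m + 1) := by
  have hsplit := Finset.card_filter_add_card_filter_not
    (s := (Finset.univ.filter fun ε : Fin (l + 2 * (m + 1)) → Bool => Fc ε = m + 1))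
    (p := fun ε => ∀ t ≤ l + 2 * (m + 1), 0 ≤ heightF ε t)
  rw [card_Fc_eq] at hsplit
  rw [T_eq, ← hsplit, bad_card]

lemma T_zero (l : ℕ) : T 0 l = 1 := by
  have : trajFinset 0 l = {fun _ => true} := by
    ext ε
    simp only [trajFinset, Finset.mem_filter, Finset.mem_univ, true_and,
      Finset.mem_singleton]
    constructor
    · rintro ⟨h1, -⟩
      have hl := heightF_last ε
      rw [h1] at hl
      have hf : Fc ε = 0 := by push_cast at hl; omega
      have : ∀ i, ε i = true := by
        intro i
        by_contra hi
        have : i ∈ Finset.univ.filter fun j => ε j = false := by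
          simp at hi ⊢; exact hi
        have := Finset.card_pos.mpr ⟨i, this⟩
        rw [Fc] at hf
        omega
      funext i; exact this i
    · rintro rfl
      have hF : Fc (fun _ : Fin (l + 2 * 0) => true) = 0 := by
        simp [Fc]
      constructor
      · rw [heightF_last, hF]; push_cast; ring
      · intro t ht
        unfold heightF
        apply Finset.sum_nonneg
        intro s hs
        split <;> simp
  rw [T, this, Finset.card_singleton]

lemma T_identity (m l : ℕ) :
    (m + l + 1) * T m l = (l + 1) * (l + 2 * m).choose m := by
  cases m with
  | zero => simp [T_zero]
  | succ m =>
    have h1 := T_add m l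
    have h2 : (l + 2 * (m + 1)).choose (m + 1) * (m + 1) =
        (l + 2 * (m + 1)).choose m * (l + m + 2) := by
      rw [Nat.choose_succ_right_eq]
      congr 1
      omega
    zify at h1 h2 ⊢
    nlinarith [h1, h2]

end Walk




namespace Walk

lemma choose_prod (s q : ℕ) (hq : q ≤ s) :
    (2 * s).choose (s - q) * ∏ j ∈ Finset.range q, (s + j + 1) =
      (2 * s).choose s * ∏ j ∈ Finset.range q, (s - j) := by
  induction q with
  | zero => simp
  | succ q ih =>
    have hq' : q ≤ s := by omega
    have key : (2 * s).choose (s - (q + 1)) * (s + q + 1) =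
        (2 * s).choose (s - q) * (s - q) := by
      have h1 : s - q = (s - (q + 1)) + 1 := by omega
      rw [h1, Nat.choose_succ_right_eq]
      congr 1
      omega
    rw [Finset.prod_range_succ, Finset.prod_range_succ]
    calc (2*s).choose (s - (q+1)) * ((∏ j ∈ Finset.range q, (s + j + 1)) * (s + q + 1))
        = ((2*s).choose (s - (q+1)) * (s + q + 1)) * ∏ j ∈ Finset.range q, (s + j + 1) := by
          ring
      _ = ((2*s).choose (s - q) * (s - q)) * ∏ j ∈ Finset.range q, (s + j + 1) := by
          rw [key]
      _ = ((2*s).choose (s - q) * ∏ j ∈ Finset.range q, (s + j + 1)) * (s - q) := by ring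
      _ = ((2*s).choose s * ∏ j ∈ Finset.range q, (s - j)) * (s - q) := by rw [ih hq']
      _ = _ := by ring

lemma sum_odd (q : ℕ) : ∑ j ∈ Finset.range q, (2 * (j : ℝ) + 1) = (q : ℝ) ^ 2 := by
  induction q with
  | zero => simp
  | succ q ih =>
    rw [Finset.sum_range_succ, ih]
    push_cast
    ring

lemma choose_ratio_le (s q : ℕ) (hq : q ≤ s) (hs : 1 ≤ s) :
    ((2 * s).choose (s - q) : ℝ) ≤
      Real.exp (-(q : ℝ) ^ 2 / (2 * s)) * (2 * s).choose s := by
  have hsR : (0:ℝ) < (s : ℝ) := by exact_mod_cast Nat.pos_of_ne_zero (by omega)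
  have h1 : ((∏ j ∈ Finset.range q, (s + j + 1) : ℕ) : ℝ) =
      ∏ j ∈ Finset.range q, ((s:ℝ) + j + 1) := by push_cast; rfl
  have h2 : ((∏ j ∈ Finset.range q, (s - j) : ℕ) : ℝ) =
      ∏ j ∈ Finset.range q, ((s:ℝ) - j) := by
    rw [Nat.cast_prod]
    refine Finset.prod_congr rfl fun j hj => ?_
    have hjs : j ≤ s := by have := Finset.mem_range.mp hj; omega
    push_cast [Nat.cast_sub hjs]
    ring
  have hidR : ((2*s).choose (s - q) : ℝ) * ∏ j ∈ Finset.range q, ((s:ℝ) + j + 1) =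
      ((2*s).choose s : ℝ) * ∏ j ∈ Finset.range q, ((s:ℝ) - j) := by
    rw [← h1, ← h2, ← Nat.cast_mul, ← Nat.cast_mul, choose_prod s q hq]
  have hprodpos : (0:ℝ) < ∏ j ∈ Finset.range q, ((s:ℝ) + j + 1) :=
    Finset.prod_pos fun j _ => by positivity
  have heq : ((2*s).choose (s - q) : ℝ) =
      ((2*s).choose s : ℝ) * ∏ j ∈ Finset.range q, (((s:ℝ) - j) / ((s:ℝ) + j + 1)) := by
    rw [Finset.prod_div_distrib, ← mul_div_assoc, eq_div_iff hprodpos.ne']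
    linarith [hidR]
  have hbound : ∏ j ∈ Finset.range q, (((s:ℝ) - j) / ((s:ℝ) + j + 1)) ≤
      Real.exp (-(q:ℝ)^2 / (2*s)) := by
    calc ∏ j ∈ Finset.range q, (((s:ℝ) - j) / ((s:ℝ) + j + 1))
        ≤ ∏ j ∈ Finset.range q, Real.exp (-((2*(j:ℝ)+1) / (2*(s:ℝ)))) := by
          apply Finset.prod_le_prod
          · intro j hj
            have hjq : j < q := Finset.mem_range.mp hj
            have hjs : (j:ℝ) ≤ (s:ℝ) := by exact_mod_cast Nat.le_of_lt_succ (by omega)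
            have hden : (0:ℝ) < (s:ℝ) + j + 1 := by positivity
            apply div_nonneg (by linarith) (le_of_lt hden)
          · intro j hj
            have hjq : j < q := Finset.mem_range.mp hj
            have hjs : (j:ℝ) + 1 ≤ (s:ℝ) := by
              have : j + 1 ≤ s := by omega
              exact_mod_cast this
            have hden : (0:ℝ) < (s:ℝ) + j + 1 := by positivity
            have e1 : ((s:ℝ) - j) / ((s:ℝ) + j + 1) =
                1 - (2*(j:ℝ)+1) / ((s:ℝ) + j + 1) := by
              field_simp
              ring
            have e2 := Real.add_one_le_exp (-((2*(j:ℝ)+1) / ((s:ℝ) + j + 1)))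
            have e3 : Real.exp (-((2*(j:ℝ)+1) / ((s:ℝ) + j + 1))) ≤
                Real.exp (-((2*(j:ℝ)+1) / (2*(s:ℝ)))) := by
              apply Real.exp_le_exp.mpr
              rw [neg_le_neg_iff]
              apply div_le_div_of_nonneg_left (by positivity) hden (by linarith)
            rw [e1]
            linarith
      _ = Real.exp (-(q:ℝ)^2 / (2*s)) := by
          rw [← Real.exp_sum]
          congr 1
          rw [Finset.sum_neg_distrib, ← Finset.sum_div, sum_odd]
          ring
  calc ((2*s).choose (s - q) : ℝ)
      = ((2*s).choose s : ℝ) * ∏ j ∈ Finset.range q, (((s:ℝ) - j) / ((s:ℝ) + j + 1)) := heq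
    _ ≤ ((2*s).choose s : ℝ) * Real.exp (-(q:ℝ)^2 / (2*s)) := by
        apply mul_le_mul_of_nonneg_left hbound (by positivity)
    _ = Real.exp (-(q:ℝ)^2 / (2*s)) * (2*s).choose s := by ring

theorem main_ineq : ∀ (m q : ℕ), 1 ≤ m + q →
    (T m (2 * q) : ℝ) ≤
      ((2 * q : ℕ) + 1) * Real.exp (-((1/8 : ℝ) * (2 * q : ℕ) ^ 2 / (m + q : ℕ))) *
        T (m + q) 0 := by
  intro m q hmq
  set s := m + q with hs
  have hq : q ≤ s := by omega
  have hs1 : 1 ≤ s := hmq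
  have hsR : (0:ℝ) < (s : ℝ) := by exact_mod_cast Nat.pos_of_ne_zero (by omega)
  have hA' : (s + q + 1) * T m (2*q) = (2*q + 1) * (2*s).choose m := by
    have h0 := T_identity m (2*q)
    rw [show 2*q + 2*m = 2*s by omega] at h0
    rw [show s + q + 1 = m + 2*q + 1 by omega]
    exact h0
  have hB' : (s + 1) * T s 0 = (2*s).choose s := by
    have h0 := T_identity s 0
    simpa using h0
  have hC := choose_ratio_le s q hq hs1
  rw [show s - q = m by omega] at hC
  have hA : ((s:ℝ) + q + 1) * (T m (2*q) : ℝ) = (2*(q:ℝ) + 1) * ((2*s).choose m : ℝ) := by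
    exact_mod_cast hA'
  have hB : ((s:ℝ) + 1) * (T s 0 : ℝ) = ((2*s).choose s : ℝ) := by
    exact_mod_cast hB'
  have hexp : -((1/8 : ℝ) * ((2 * q : ℕ) : ℝ) ^ 2 / ((s : ℕ) : ℝ)) =
      -(q:ℝ)^2 / (2*(s:ℝ)) := by
    push_cast
    field_simp
    ring
  have hq1 : (0:ℝ) < (s:ℝ) + q + 1 := by positivity
  have key : (T m (2*q) : ℝ) = (2*(q:ℝ) + 1) * ((2*s).choose m : ℝ) / ((s:ℝ) + q + 1) := by
    rw [eq_div_iff hq1.ne']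
    linarith [hA]
  calc (T m (2*q) : ℝ)
      = (2*(q:ℝ) + 1) * ((2*s).choose m : ℝ) / ((s:ℝ) + q + 1) := key
    _ ≤ (2*(q:ℝ) + 1) * (Real.exp (-(q:ℝ)^2 / (2*s)) * ((2*s).choose s : ℝ)) /
        ((s:ℝ) + q + 1) := by gcongr
    _ ≤ (2*(q:ℝ) + 1) * (Real.exp (-(q:ℝ)^2 / (2*s)) * ((2*s).choose s : ℝ)) /
        ((s:ℝ) + 1) := by
        apply div_le_div_of_nonneg_left (by positivity) (by positivity)
          (by linarith [Nat.cast_nonneg (α := ℝ) q])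
    _ = (2*(q:ℝ) + 1) * Real.exp (-(q:ℝ)^2 / (2*s)) * (T s 0 : ℝ) := by
        rw [← hB]
        field_simp
    _ = ((2 * q : ℕ) + 1) * Real.exp (-((1/8 : ℝ) * (2 * q : ℕ) ^ 2 / (s : ℕ))) *
        (T s 0 : ℝ) := by
        rw [hexp]
        push_cast
        ring

end Walk

/-- There is a universal constant `C₀ > 0` such that for all `m` and even `l` with
`s = m + l/2 ≥ 1`, one has `T_{m,l} ≤ (l+1) exp(-C₀ l²/s) T_{s,0}`. -/
theorem T_le_exp_mul_T_dyck :
    ∃ C0 : ℝ, 0 < C0 ∧ ∀ (m q : ℕ), 1 ≤ m + q →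
      (T m (2 * q) : ℝ) ≤
        ((2 * q : ℕ) + 1) * Real.exp (-(C0 * (2 * q : ℕ) ^ 2 / (m + q : ℕ))) * T (m + q) 0 := by
  exact ⟨1/8, by norm_num, Walk.main_ineq⟩

end
end

section
/- There exist constants C > 0 and C_0 > 0 such that for every integer n ≥ 1 and every even integer k with 4 C_0 √n ≤ k ≤ 2n, one has T̃_{2n}^{k} ≤ C (k²/n) exp(−C_0 k²/n) T_{2n}^{0}. -/
open Finset

noncomputable section

open scoped Classical in
/-- `T_{2n}^k`: nonnegative walks of length `L` from `0` to `k`, identified with their step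
sequences. -/
def endAtFinset (L k : ℕ) : Finset (Fin L → Bool) :=
  Finset.univ.filter (fun ε => heightF ε L = k ∧ ∀ t ≤ L, 0 ≤ heightF ε t)

open scoped Classical in
/-- `T̃_{2n}^k`: walks of length `L` from `0` to `k` confined to the strip `[0, k]`. -/
def stripFinset (L k : ℕ) : Finset (Fin L → Bool) :=
  Finset.univ.filter (fun ε =>
    heightF ε L = k ∧ ∀ t ≤ L, 0 ≤ heightF ε t ∧ heightF ε t ≤ k)

/-- single step -/
def gstep {L : ℕ} (ε : Fin L → Bool) (s : ℕ) : ℤ :=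
  if h : s < L then (if ε ⟨s, h⟩ then 1 else -1) else 0

lemma heightF_eq_sum {L : ℕ} (ε : Fin L → Bool) (t : ℕ) :
    heightF ε t = ∑ s ∈ Finset.range t, gstep ε s := rfl

lemma heightF_zero {L : ℕ} (ε : Fin L → Bool) : heightF ε 0 = 0 := by
  simp [heightF]

lemma heightF_succ {L : ℕ} (ε : Fin L → Bool) (t : ℕ) :
    heightF ε (t + 1) = heightF ε t + gstep ε t := by
  rw [heightF_eq_sum, heightF_eq_sum, Finset.sum_range_succ]

lemma gstep_neg_le {L : ℕ} (ε : Fin L → Bool) (s : ℕ) : -1 ≤ gstep ε s := by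
  unfold gstep; split_ifs <;> omega

lemma gstep_le_one {L : ℕ} (ε : Fin L → Bool) (s : ℕ) : gstep ε s ≤ 1 := by
  unfold gstep; split_ifs <;> omega

/-- number of up-steps -/
def countT {L : ℕ} (ε : Fin L → Bool) : ℕ := ∑ i : Fin L, (if ε i then 1 else 0)

lemma heightF_last {L : ℕ} (ε : Fin L → Bool) :
    heightF ε L = 2 * (countT ε : ℤ) - L := by
  rw [heightF_eq_sum]
  have h1 : ∑ s ∈ Finset.range L, gstep ε s = ∑ i : Fin L, (if ε i then (1:ℤ) else -1) := by
    rw [← Fin.sum_univ_eq_sum_range (fun s => gstep ε s) L]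
    refine Finset.sum_congr rfl fun i _ => ?_
    simp [gstep, i.isLt]
  rw [h1]
  have h2 : ∀ i : Fin L, (if ε i then (1:ℤ) else -1) = 2 * (if ε i then 1 else 0) - 1 := by
    intro i; split_ifs <;> ring
  rw [Finset.sum_congr rfl fun i _ => h2 i, Finset.sum_sub_distrib, ← Finset.mul_sum]
  have : (countT ε : ℤ) = ∑ i : Fin L, (if ε i then (1:ℤ) else 0) := by
    unfold countT; push_cast; simp
  simp [this]

lemma countT_le {L : ℕ} (ε : Fin L → Bool) : countT ε ≤ L := by
  calc countT ε ≤ ∑ _i : Fin L, 1 := Finset.sum_le_sum fun i _ => by split_ifs <;> omega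
  _ = L := by simp

open scoped Classical in
def countFinset (L c : ℕ) : Finset (Fin L → Bool) :=
  Finset.univ.filter (fun ε => countT ε = c)

lemma countT_eq_card {L : ℕ} (ε : Fin L → Bool) :
    countT ε = (Finset.univ.filter (fun i => ε i = true)).card := by
  rw [Finset.card_filter]
  unfold countT
  refine Finset.sum_congr rfl fun i _ => ?_
  by_cases h : ε i <;> simp [h]

lemma card_countFinset (L c : ℕ) : (countFinset L c).card = L.choose c := by
  classical
  have : (countFinset L c).card = (Finset.powersetCard c (Finset.univ : Finset (Fin L))).card := by
    refine Finset.card_bij' (fun ε _ => Finset.univ.filter (fun i => ε i = true))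
      (fun S _ => fun i => decide (i ∈ S)) ?_ ?_ ?_ ?_
    · intro ε hε
      rw [Finset.mem_powersetCard]
      refine ⟨Finset.filter_subset _ _, ?_⟩
      rw [← countT_eq_card]
      simpa [countFinset] using hε
    · intro S hS
      simp only [countFinset, Finset.mem_filter, Finset.mem_univ, true_and]
      rw [countT_eq_card]
      rw [Finset.mem_powersetCard] at hS
      rw [← hS.2]
      congr 1
      ext i
      simp
    · intro ε hε
      funext i
      by_cases h : ε i <;> simp [h]
    · intro S hS
      ext i
      simp
  rw [this, Finset.card_powersetCard]
  simp

/-- flip all steps from position `τ` on -/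
def flipAfter {L : ℕ} (ε : Fin L → Bool) (τ : ℕ) : Fin L → Bool :=
  fun i => if (i : ℕ) < τ then ε i else !(ε i)

open scoped Classical in
/-- first time the height is negative (junk value 0 if none) -/
def tauF {L : ℕ} (ε : Fin L → Bool) : ℕ :=
  if hex : ∃ t, heightF ε t < 0 then Nat.find hex else 0

open scoped Classical in
def sigmaMap {L : ℕ} (ε : Fin L → Bool) : Fin L → Bool := flipAfter ε (tauF ε)

section tau
variable {L : ℕ} (ε : Fin L → Bool) (hex : ∃ t, heightF ε t < 0)
include hex

lemma tauF_neg : heightF ε (tauF ε) < 0 := by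
  rw [tauF, dif_pos hex]; exact Nat.find_spec hex

lemma tauF_min : ∀ t < tauF ε, 0 ≤ heightF ε t := by
  intro t ht
  rw [tauF, dif_pos hex] at ht
  have := Nat.find_min hex ht
  omega

lemma tauF_le {t : ℕ} (ht : heightF ε t < 0) : tauF ε ≤ t := by
  rw [tauF, dif_pos hex]; exact Nat.find_min' hex ht

lemma heightF_tauF : heightF ε (tauF ε) = -1 := by
  have hneg := tauF_neg ε hex
  have hpos : tauF ε ≠ 0 := by
    intro h0
    rw [h0, heightF_zero] at hneg
    omega
  obtain ⟨s, hs⟩ := Nat.exists_eq_succ_of_ne_zero hpos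
  have h1 : 0 ≤ heightF ε s := tauF_min ε hex s (by omega)
  have h2 := heightF_succ ε s
  have h3 := gstep_neg_le ε s
  rw [hs] at hneg ⊢
  rw [h2] at hneg ⊢
  omega

end tau

lemma gstep_flipAfter {L : ℕ} (ε : Fin L → Bool) (τ s : ℕ) :
    gstep (flipAfter ε τ) s = if s < τ then gstep ε s else -gstep ε s := by
  unfold gstep flipAfter
  by_cases hL : s < L
  · rw [dif_pos hL, dif_pos hL]
    by_cases hτ : s < τ
    · simp [hτ]
    · simp only [hτ, if_false]
      cases h : ε ⟨s, hL⟩ <;> simp [h]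
  · rw [dif_neg hL, dif_neg hL]
    simp

lemma heightF_flipAfter_le {L : ℕ} (ε : Fin L → Bool) {τ t : ℕ} (h : t ≤ τ) :
    heightF (flipAfter ε τ) t = heightF ε t := by
  rw [heightF_eq_sum, heightF_eq_sum]
  refine Finset.sum_congr rfl fun s hs => ?_
  rw [Finset.mem_range] at hs
  rw [gstep_flipAfter, if_pos (by omega)]

lemma heightF_flipAfter_ge {L : ℕ} (ε : Fin L → Bool) {τ t : ℕ} (h : τ ≤ t) :
    heightF (flipAfter ε τ) t = 2 * heightF ε τ - heightF ε t := by
  have key : ∀ u, heightF (flipAfter ε τ) (τ + u) = 2 * heightF ε τ - heightF ε (τ + u) := by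
    intro u
    induction u with
    | zero =>
        rw [Nat.add_zero, heightF_flipAfter_le ε (le_refl τ)]; ring
    | succ v ih =>
        have h1 : τ + (v + 1) = (τ + v) + 1 := by omega
        rw [h1, heightF_succ, heightF_succ, ih, gstep_flipAfter, if_neg (by omega)]
        ring
  obtain ⟨u, hu⟩ := Nat.exists_eq_add_of_le h
  rw [hu]; exact key u

section sig
variable {L : ℕ} (ε : Fin L → Bool) (hex : ∃ t, heightF ε t < 0)
include hex

omit hex in
lemma heightF_sigmaMap_le {t : ℕ} (ht : t ≤ tauF ε) :
    heightF (sigmaMap ε) t = heightF ε t := heightF_flipAfter_le ε ht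

lemma heightF_sigmaMap_ge {t : ℕ} (ht : tauF ε ≤ t) :
    heightF (sigmaMap ε) t = -2 - heightF ε t := by
  rw [sigmaMap, heightF_flipAfter_ge ε ht, heightF_tauF ε hex]; ring

lemma exists_neg_sigmaMap : ∃ t, heightF (sigmaMap ε) t < 0 := by
  refine ⟨tauF ε, ?_⟩
  rw [heightF_sigmaMap_le ε (le_refl _), heightF_tauF ε hex]
  omega

lemma tauF_sigmaMap : tauF (sigmaMap ε) = tauF ε := by
  have hex' := exists_neg_sigmaMap ε hex
  refine le_antisymm (tauF_le _ hex' ?_) ?_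
  · rw [heightF_sigmaMap_le ε (le_refl _), heightF_tauF ε hex]; omega
  · by_contra hlt
    push_neg at hlt
    have h1 := tauF_neg _ hex'
    rw [heightF_sigmaMap_le ε (le_of_lt hlt)] at h1
    have h2 := tauF_min ε hex _ hlt
    omega

lemma sigmaMap_sigmaMap : sigmaMap (sigmaMap ε) = ε := by
  funext i
  show flipAfter (sigmaMap ε) (tauF (sigmaMap ε)) i = ε i
  rw [tauF_sigmaMap ε hex]
  show (if (i:ℕ) < tauF ε then sigmaMap ε i else !(sigmaMap ε i)) = ε i
  have : sigmaMap ε i = if (i:ℕ) < tauF ε then ε i else !(ε i) := rfl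
  rw [this]
  by_cases h : (i:ℕ) < tauF ε <;> simp [h]

end sig

open scoped Classical in
lemma card_hit (L u : ℕ) (h1 : L ≤ 2 * u) (h2 : u + 1 ≤ L) :
    ((countFinset L u).filter (fun ε => ∃ t ≤ L, heightF ε t < 0)).card
      = L.choose (u + 1) := by
  have hsym : L.choose (u + 1) = L.choose (L - u - 1) := by
    rw [show L - u - 1 = L - (u + 1) by omega, Nat.choose_symm h2]
  rw [hsym, ← card_countFinset]
  refine Finset.card_bij' (fun ε _ => sigmaMap ε) (fun ε _ => sigmaMap ε) ?_ ?_ ?_ ?_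
  · intro ε hε
    rw [Finset.mem_filter] at hε
    obtain ⟨hc, t0, ht0L, ht0⟩ := hε
    rw [countFinset, Finset.mem_filter] at hc ⊢
    have hex : ∃ t, heightF ε t < 0 := ⟨t0, ht0⟩
    have hτ : tauF ε ≤ L := le_trans (tauF_le ε hex ht0) ht0L
    have hL : heightF (sigmaMap ε) L = -2 - heightF ε L := heightF_sigmaMap_ge ε hex hτ
    have hεL := heightF_last ε
    have hσL := heightF_last (sigmaMap ε)
    rw [hc.2] at hεL
    refine ⟨Finset.mem_univ _, ?_⟩
    show countT (sigmaMap ε) = L - u - 1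
    have hcle := countT_le (sigmaMap ε)
    omega
  · intro ε hε
    rw [countFinset, Finset.mem_filter] at hε
    have hεL := heightF_last ε
    rw [hε.2] at hεL
    have hcl : (L:ℤ) - u - 1 ≤ L := by omega
    have hLneg : heightF ε L < 0 := by
      rw [hεL]; push_cast [Nat.cast_sub (show u + 1 ≤ L by omega)]; omega
    have hex : ∃ t, heightF ε t < 0 := ⟨L, hLneg⟩
    have hτ : tauF ε ≤ L := tauF_le ε hex hLneg
    rw [Finset.mem_filter]
    constructor
    · rw [countFinset, Finset.mem_filter]
      refine ⟨Finset.mem_univ _, ?_⟩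
      show countT (sigmaMap ε) = u
      have hL : heightF (sigmaMap ε) L = -2 - heightF ε L := heightF_sigmaMap_ge ε hex hτ
      have hσL := heightF_last (sigmaMap ε)
      rw [hεL] at hL
      push_cast [Nat.cast_sub (show u + 1 ≤ L by omega)] at hL
      omega
    · refine ⟨tauF ε, hτ, ?_⟩
      show heightF (sigmaMap ε) (tauF ε) < 0
      rw [heightF_sigmaMap_le ε (le_refl _), heightF_tauF ε hex]
      omega
  · intro ε hε
    rw [Finset.mem_filter] at hε
    obtain ⟨_, t0, _, ht0⟩ := hε
    exact sigmaMap_sigmaMap ε ⟨t0, ht0⟩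
  · intro ε hε
    rw [countFinset, Finset.mem_filter] at hε
    have hεL := heightF_last ε
    rw [hε.2] at hεL
    have hLneg : heightF ε L < 0 := by
      rw [hεL]; push_cast [Nat.cast_sub (show u + 1 ≤ L by omega)]; omega
    exact sigmaMap_sigmaMap ε ⟨L, hLneg⟩

open scoped Classical in
lemma endAt_card_add (L u : ℕ) (h1 : L ≤ 2 * u) (h2 : u ≤ L) :
    (endAtFinset L (2 * u - L)).card + L.choose (u + 1) = L.choose u := by
  have hpart := Finset.card_filter_add_card_filter_not
    (s := countFinset L u) (p := fun ε => ∀ t ≤ L, 0 ≤ heightF ε t)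
  have hP : (countFinset L u).filter (fun ε => ∀ t ≤ L, 0 ≤ heightF ε t)
      = endAtFinset L (2 * u - L) := by
    ext ε
    simp only [countFinset, endAtFinset, Finset.mem_filter, Finset.mem_univ, true_and]
    have hεL := heightF_last ε
    constructor
    · rintro ⟨hc, hp⟩; exact ⟨by omega, hp⟩
    · rintro ⟨hc, hp⟩; exact ⟨by omega, hp⟩
  rcases eq_or_lt_of_le h2 with heq | hlt
  · -- u = L
    subst heq
    rw [Nat.choose_eq_zero_of_lt (by omega), Nat.choose_self, Nat.add_zero]
    have hall : endAtFinset u (2 * u - u) = {fun _ => true} := by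
      ext ε
      simp only [endAtFinset, Finset.mem_filter, Finset.mem_univ, true_and,
        Finset.mem_singleton]
      constructor
      · rintro ⟨hend, -⟩
        have hεL := heightF_last ε
        have hc : countT ε = u := by omega
        rw [countT_eq_card] at hc
        have huniv : Finset.univ.filter (fun i => ε i = true) = Finset.univ := by
          apply Finset.eq_univ_of_card
          simp [hc]
        funext i
        have hi : i ∈ Finset.univ.filter (fun i => ε i = true) := by
          rw [huniv]; exact Finset.mem_univ i
        exact (Finset.mem_filter.mp hi).2
      · rintro rfl
        have hh : ∀ t ≤ u, heightF (fun _ : Fin u => true) t = t := by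
          intro t ht
          rw [heightF_eq_sum]
          have : ∀ s ∈ Finset.range t, gstep (fun _ : Fin u => true) s = 1 := by
            intro s hs
            rw [Finset.mem_range] at hs
            simp [gstep, show s < u by omega]
          rw [Finset.sum_congr rfl this]
          simp
        refine ⟨by rw [hh u (le_refl u)]; push_cast; omega, fun t ht => by rw [hh t ht]; omega⟩
    rw [hall, Finset.card_singleton]
  · rw [← hP]
    have hneg : ((countFinset L u).filter (fun ε => ¬∀ t ≤ L, 0 ≤ heightF ε t)).card
        = L.choose (u + 1) := by
      rw [← card_hit L u h1 hlt]
      congr 1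
      apply Finset.filter_congr
      intro ε _
      constructor
      · intro h
        push_neg at h
        obtain ⟨t, ht, hneg⟩ := h
        exact ⟨t, ht, by omega⟩
      · rintro ⟨t, ht, hneg⟩ h
        have := h t ht
        omega
    rw [← hneg, ← card_countFinset L u, ← hpart]

def firstHalf {n : ℕ} (ε : Fin (2 * n) → Bool) : Fin n → Bool :=
  fun s => ε ⟨(s : ℕ), by omega⟩

def secondHalf {n : ℕ} (ε : Fin (2 * n) → Bool) : Fin n → Bool :=
  fun s => ε ⟨2 * n - 1 - (s : ℕ), by omega⟩

lemma heightF_firstHalf {n : ℕ} (ε : Fin (2 * n) → Bool) {t : ℕ} (ht : t ≤ n) :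
    heightF (firstHalf ε) t = heightF ε t := by
  rw [heightF_eq_sum, heightF_eq_sum]
  refine Finset.sum_congr rfl fun s hs => ?_
  rw [Finset.mem_range] at hs
  have hsn : s < n := by omega
  have hs2n : s < 2 * n := by omega
  simp [gstep, hsn, hs2n, firstHalf]
  rfl

lemma heightF_secondHalf {n : ℕ} (ε : Fin (2 * n) → Bool) {t : ℕ} (ht : t ≤ n) :
    heightF (secondHalf ε) t = heightF ε (2 * n) - heightF ε (2 * n - t) := by
  rw [heightF_eq_sum, heightF_eq_sum, heightF_eq_sum]
  rw [← Finset.sum_Ico_eq_sub _ (by omega : 2 * n - t ≤ 2 * n)]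
  rw [Finset.sum_Ico_eq_sum_range]
  have h2 : 2 * n - (2 * n - t) = t := by omega
  rw [h2]
  rw [← Finset.sum_range_reflect (fun j => gstep ε (2 * n - t + j)) t]
  refine Finset.sum_congr rfl fun s hs => ?_
  rw [Finset.mem_range] at hs
  have hsn : s < n := by omega
  have harith : 2 * n - t + (t - 1 - s) = 2 * n - 1 - s := by omega
  rw [harith]
  have hlt : 2 * n - 1 - s < 2 * n := by omega
  simp only [gstep, secondHalf, dif_pos hsn, dif_pos hlt]
  rfl

open scoped Classical in
lemma strip_card_le_sum (n k : ℕ) :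
    (stripFinset (2 * n) k).card ≤
      ∑ m ∈ Finset.range (k + 1), (endAtFinset n m).card * (endAtFinset n (k - m)).card := by
  classical
  have hcard : ((Finset.range (k + 1)).sigma
      (fun m => endAtFinset n m ×ˢ endAtFinset n (k - m))).card
      = ∑ m ∈ Finset.range (k + 1), (endAtFinset n m).card * (endAtFinset n (k - m)).card := by
    rw [Finset.card_sigma]
    exact Finset.sum_congr rfl fun m _ => Finset.card_product _ _
  rw [← hcard]
  apply Finset.card_le_card_of_injOn
    (fun ε => ⟨(heightF ε n).toNat, (firstHalf ε, secondHalf ε)⟩)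
  · intro ε hε
    rw [stripFinset, Finset.mem_coe, Finset.mem_filter] at hε
    obtain ⟨-, hend, hbnd⟩ := hε
    have hn0 : 0 ≤ heightF ε n := (hbnd n (by omega)).1
    have hnk : heightF ε n ≤ k := (hbnd n (by omega)).2
    have hm : ((heightF ε n).toNat : ℤ) = heightF ε n := Int.toNat_of_nonneg hn0
    rw [Finset.mem_coe, Finset.mem_sigma]
    refine ⟨?_, ?_⟩
    · show (heightF ε n).toNat ∈ Finset.range (k + 1)
      exact Finset.mem_range.mpr (by omega)
    show (firstHalf ε, secondHalf ε) ∈ endAtFinset n (heightF ε n).toNat ×ˢ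
      endAtFinset n (k - (heightF ε n).toNat)
    rw [Finset.mem_product]
    constructor
    · rw [endAtFinset, Finset.mem_filter]
      refine ⟨Finset.mem_univ _, ?_, fun t htn => ?_⟩
      · rw [heightF_firstHalf ε (le_refl n), hm]
      · rw [heightF_firstHalf ε htn]
        exact (hbnd t (by omega)).1
    · rw [endAtFinset, Finset.mem_filter]
      refine ⟨Finset.mem_univ _, ?_, fun t htn => ?_⟩
      · rw [heightF_secondHalf ε (le_refl n), hend]
        have h1 : 2 * n - n = n := by omega
        rw [h1]
        push_cast [Nat.cast_sub (show (heightF ε n).toNat ≤ k by omega)]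
        omega
      · rw [heightF_secondHalf ε htn, hend]
        have := (hbnd (2 * n - t) (by omega)).2
        omega
  · intro ε hε ε' hε' heq
    simp only [Sigma.mk.inj_iff] at heq
    obtain ⟨hm, hpair⟩ := heq
    have hpair' : (firstHalf ε, secondHalf ε) = (firstHalf ε', secondHalf ε') :=
      eq_of_heq hpair
    rw [Prod.mk.injEq] at hpair'
    obtain ⟨h1, h2⟩ := hpair'
    funext i
    by_cases hi : (i : ℕ) < n
    · have := congrFun h1 ⟨(i : ℕ), hi⟩
      simp only [firstHalf] at this
      convert this using 2 <;> exact (Fin.ext rfl)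
    · have hs : 2 * n - 1 - (i : ℕ) < n := by omega
      have := congrFun h2 ⟨2 * n - 1 - (i : ℕ), hs⟩
      simp only [secondHalf] at this
      have harith : 2 * n - 1 - (2 * n - 1 - (i : ℕ)) = (i : ℕ) := by omega
      convert this using 2 <;> · apply Fin.ext; simp [harith]

lemma choose_ratio_step (n h I : ℕ) (hh1 : n ≤ 2 * h) (hh2 : 2 * h ≤ n + 1)
    (hle : h + I + 1 ≤ n) :
    ((n.choose (h + I + 1) : ℝ)) ≤ n.choose (h + I) * Real.exp (-(2 * I + 1) / (n + 1)) := by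
  have hid := Nat.choose_succ_right_eq n (h + I)
  have hidR : (n.choose (h + I + 1) : ℝ) * (h + I + 1) = n.choose (h + I) * ((n : ℝ) - h - I) := by
    have : ((n - (h + I) : ℕ) : ℝ) = (n : ℝ) - h - I := by
      push_cast [Nat.cast_sub (show h + I ≤ n by omega)]; ring
    rw [← this]
    exact_mod_cast congrArg (Nat.cast : ℕ → ℝ) hid
  have hpos : (0 : ℝ) < h + I + 1 := by positivity
  have hC : (n.choose (h + I + 1) : ℝ) = n.choose (h + I) * (((n : ℝ) - h - I) / (h + I + 1)) := by
    field_simp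
    linarith [hidR]
  rw [hC]
  apply mul_le_mul_of_nonneg_left _ (Nat.cast_nonneg _)
  have hIh : (I : ℝ) + 1 ≤ h := by
    have : I + 1 ≤ h := by omega
    exact_mod_cast this
  have hA : (n : ℝ) ≤ 2 * h := by exact_mod_cast hh1
  have hB : (2 : ℝ) * h ≤ n + 1 := by exact_mod_cast hh2
  have hCn : (h : ℝ) + I + 1 ≤ n := by exact_mod_cast hle
  have hInn : (0 : ℝ) ≤ I := Nat.cast_nonneg I
  have e1 : ((n : ℝ) - h - I) / (h + I + 1) ≤ ((n : ℝ) - 2 * I) / (n + 1) := by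
    rw [div_le_div_iff₀ hpos (by positivity)]
    nlinarith [mul_nonneg (sub_nonneg.mpr hIh) hInn, mul_nonneg (sub_nonneg.mpr hIh)
      (sub_nonneg.mpr hIh)]
  refine le_trans e1 ?_
  have e2 : ((n : ℝ) - 2 * I) / (n + 1) = -( (2 * I + 1) / (n + 1)) + 1 := by
    field_simp
    ring
  rw [e2, neg_div]
  exact Real.add_one_le_exp _

lemma choose_decay (n : ℕ) (hh1 : n ≤ 2 * ((n + 1) / 2)) (I : ℕ) :
    ((n.choose ((n + 1) / 2 + I) : ℝ)) ≤
      (n.choose ((n + 1) / 2) : ℝ) * Real.exp (-(I : ℝ) ^ 2 / (n + 1)) := by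
  set h := (n + 1) / 2 with hh
  have hh2 : 2 * h ≤ n + 1 := by omega
  induction I with
  | zero => simp
  | succ J ih =>
      by_cases hle : h + J + 1 ≤ n
      · have step := choose_ratio_step n h J hh1 hh2 hle
        have e3 : (n.choose (h + (J + 1)) : ℝ) = (n.choose (h + J + 1) : ℝ) := by
          norm_num [Nat.add_assoc]
        rw [e3]
        refine le_trans step ?_
        refine le_trans (mul_le_mul_of_nonneg_right ih (Real.exp_nonneg _)) ?_
        rw [mul_assoc, ← Real.exp_add]
        apply mul_le_mul_of_nonneg_left _ (Nat.cast_nonneg _)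
        apply Real.exp_le_exp.mpr
        have hpos : (0:ℝ) < (n:ℝ) + 1 := by positivity
        rw [← add_div, div_le_div_iff_of_pos_right hpos]
        push_cast
        nlinarith []
      · have : n.choose (h + (J + 1)) = 0 := Nat.choose_eq_zero_of_lt (by omega)
        rw [this]
        push_cast
        positivity

lemma endAt_bound (n m : ℕ) (hn : 1 ≤ n) :
    ((endAtFinset n m).card : ℝ) ≤
      2 * ((m : ℝ) + 1) / n * (n.choose ((n + 1) / 2) : ℝ) *
        Real.exp ((-(m : ℝ) ^ 2 / 4 + m / 2) / (n + 1)) := by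
  rcases Finset.eq_empty_or_nonempty (endAtFinset n m) with he | ⟨ε, hε⟩
  · rw [he]
    simp only [Finset.card_empty, Nat.cast_zero]
    positivity
  · have hmem := hε
    rw [endAtFinset, Finset.mem_filter] at hmem
    obtain ⟨-, hend, -⟩ := hmem
    have hεL := heightF_last ε
    have hcle := countT_le ε
    set u := countT ε with hu
    have hkey : n + m = 2 * u := by omega
    have hmn : m ≤ n := by omega
    have hadd := endAt_card_add n u (by omega) (by omega)
    have hmu : 2 * u - n = m := by omega
    rw [hmu] at hadd
    have haddR : ((endAtFinset n m).card : ℝ) + (n.choose (u + 1) : ℝ) = (n.choose u : ℝ) := by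
      exact_mod_cast congrArg (Nat.cast : ℕ → ℝ) hadd
    have hident : (n.choose (u + 1) : ℝ) * (u + 1) = (n.choose u : ℝ) * ((u : ℝ) - m) := by
      have h0 := Nat.choose_succ_right_eq n u
      have h1 : n - u = u - m := by omega
      rw [h1] at h0
      have h2 : ((u - m : ℕ) : ℝ) = (u : ℝ) - m := by
        push_cast [Nat.cast_sub (show m ≤ u by omega)]; ring
      rw [← h2]
      exact_mod_cast congrArg (Nat.cast : ℕ → ℝ) h0
    have hu1 : (0 : ℝ) < (u : ℝ) + 1 := by positivity
    have hcard : ((endAtFinset n m).card : ℝ) = (n.choose u : ℝ) * (((m : ℝ) + 1) / ((u : ℝ) + 1)) := by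
      rw [mul_div_assoc', eq_div_iff (ne_of_gt hu1)]
      linear_combination haddR * ((u:ℝ) + 1) - hident
    -- decay bound on the binomial
    set h := (n + 1) / 2 with hhdef
    have hh1 : n ≤ 2 * h := by omega
    have hIdef : u = h + (u - h) := by omega
    set I := u - h with hI
    have hdecay := choose_decay n hh1 I
    rw [← hIdef] at hdecay
    have hd : (m : ℝ) - 1 ≤ 2 * I := by
      have : m ≤ 2 * (u - h) + 1 := by omega
      have h2 : (m : ℝ) ≤ 2 * (I : ℝ) + 1 := by exact_mod_cast this
      linarith
    have hexpmono : Real.exp (-(I : ℝ) ^ 2 / (n + 1)) ≤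
        Real.exp ((-(m : ℝ) ^ 2 / 4 + m / 2) / (n + 1)) := by
      apply Real.exp_le_exp.mpr
      rw [div_le_div_iff_of_pos_right (by positivity : (0:ℝ) < (n:ℝ) + 1)]
      nlinarith [sq_nonneg ((m : ℝ) - 1 - 2 * I), sq_nonneg ((m : ℝ) - 2 * I)]
    have hfrac : ((m : ℝ) + 1) / ((u : ℝ) + 1) ≤ 2 * ((m : ℝ) + 1) / n := by
      rw [div_le_div_iff₀ hu1 (by positivity : (0:ℝ) < (n:ℝ))]
      have hnu : (n : ℝ) ≤ 2 * (u : ℝ) + 2 := by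
        have : n ≤ 2 * u + 2 := by omega
        exact_mod_cast this
      nlinarith [Nat.cast_nonneg (α := ℝ) m]
    have hfracpos : (0 : ℝ) ≤ ((m : ℝ) + 1) / ((u : ℝ) + 1) := by positivity
    calc ((endAtFinset n m).card : ℝ)
        = (n.choose u : ℝ) * (((m : ℝ) + 1) / ((u : ℝ) + 1)) := hcard
      _ ≤ ((n.choose h : ℝ) * Real.exp ((-(m : ℝ) ^ 2 / 4 + m / 2) / (n + 1)))
            * (((m : ℝ) + 1) / ((u : ℝ) + 1)) := by
          apply mul_le_mul_of_nonneg_right _ hfracpos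
          exact le_trans hdecay
            (mul_le_mul_of_nonneg_left hexpmono (Nat.cast_nonneg _))
      _ ≤ ((n.choose h : ℝ) * Real.exp ((-(m : ℝ) ^ 2 / 4 + m / 2) / (n + 1)))
            * (2 * ((m : ℝ) + 1) / n) := by
          apply mul_le_mul_of_nonneg_left hfrac (by positivity)
      _ = 2 * ((m : ℝ) + 1) / n * (n.choose h : ℝ) *
            Real.exp ((-(m : ℝ) ^ 2 / 4 + m / 2) / (n + 1)) := by ring

lemma cb_rel (m : ℕ) :
    ((m : ℝ) + 1) * (Nat.centralBinom (m + 1) : ℝ) = 2 * (2 * m + 1) * (Nat.centralBinom m : ℝ) := by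
  exact_mod_cast congrArg (Nat.cast : ℕ → ℝ) (Nat.succ_mul_centralBinom_succ m)

lemma cb_upper (m : ℕ) :
    (Nat.centralBinom m : ℝ) ^ 2 * (2 * m + 1) ≤ 4 ^ (2 * m) := by
  induction m with
  | zero => simp [Nat.centralBinom]
  | succ p ih =>
      have rel := cb_rel p
      have relsq : (Nat.centralBinom (p + 1) : ℝ) ^ 2 * ((p : ℝ) + 1) ^ 2
          = 4 * (2 * p + 1) ^ 2 * (Nat.centralBinom p : ℝ) ^ 2 := by
        have h := congrArg (fun x : ℝ => x ^ 2) rel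
        linear_combination h
      have hp1 : (0 : ℝ) < ((p : ℝ) + 1) ^ 2 := by positivity
      rw [show 2 * (p + 1) = 2 * p + 2 by ring]
      have h4 : (0 : ℝ) < 4 ^ (2 * p) := by positivity
      have key : (Nat.centralBinom (p + 1) : ℝ) ^ 2 * (2 * (p + 1) + 1) * ((p : ℝ) + 1) ^ 2
          ≤ 4 ^ (2 * p + 2) * ((p : ℝ) + 1) ^ 2 := by
        have e1 : (4 : ℝ) ^ (2 * p + 2) = 16 * 4 ^ (2 * p) := by ring
        rw [e1]
        push_cast
        nlinarith [ih, relsq, sq_nonneg ((Nat.centralBinom p : ℝ)), h4,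
          mul_nonneg (sq_nonneg ((Nat.centralBinom p : ℝ))) (by positivity : (0:ℝ) ≤ (p:ℝ))]
      have := (mul_le_mul_iff_left₀ hp1).mp key
      push_cast at this ⊢
      convert this using 1 <;> ring
  
lemma cb_lower (m : ℕ) :
    (4 : ℝ) ^ (2 * m) ≤ (Nat.centralBinom m : ℝ) ^ 2 * (4 * m + 1) := by
  induction m with
  | zero => simp [Nat.centralBinom]
  | succ p ih =>
      have rel := cb_rel p
      have relsq : (Nat.centralBinom (p + 1) : ℝ) ^ 2 * ((p : ℝ) + 1) ^ 2
          = 4 * (2 * p + 1) ^ 2 * (Nat.centralBinom p : ℝ) ^ 2 := by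
        have h := congrArg (fun x : ℝ => x ^ 2) rel
        linear_combination h
      have hp1 : (0 : ℝ) < ((p : ℝ) + 1) ^ 2 := by positivity
      have key : (4 : ℝ) ^ (2 * (p + 1)) * ((p : ℝ) + 1) ^ 2
          ≤ (Nat.centralBinom (p + 1) : ℝ) ^ 2 * (4 * ((p : ℝ) + 1) + 1) * ((p : ℝ) + 1) ^ 2 := by
        have e1 : (4 : ℝ) ^ (2 * (p + 1)) = 16 * 4 ^ (2 * p) := by ring
        rw [e1]
        nlinarith [ih, relsq, sq_nonneg ((Nat.centralBinom p : ℝ)),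
          (by positivity : (0:ℝ) < 4 ^ (2 * p)),
          mul_nonneg (sq_nonneg ((Nat.centralBinom p : ℝ))) (by positivity : (0:ℝ) ≤ (p:ℝ))]
      have := (mul_le_mul_iff_left₀ hp1).mp key
      push_cast at this ⊢
      convert this using 1 <;> ring

lemma M_sq_bound (n : ℕ) :
    (n.choose ((n + 1) / 2) : ℝ) ^ 2 * ((n : ℝ) + 1) ≤ 4 ^ n := by
  rcases Nat.even_or_odd n with ⟨m, hm⟩ | ⟨m, hm⟩
  · subst hm
    have h1 : (m + m + 1) / 2 = m := by omega
    rw [h1]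
    have h2 : (m + m : ℕ) = 2 * m := by ring
    rw [h2]
    have := cb_upper m
    rw [Nat.centralBinom] at this
    push_cast at this ⊢
    convert this using 2 <;> push_cast <;> ring
  · subst hm
    have h1 : (2 * m + 1 + 1) / 2 = m + 1 := by omega
    rw [h1]
    have hsym : (2 * m + 1).choose m = (2 * m + 1).choose (m + 1) := by
      have := Nat.choose_symm (show m + 1 ≤ 2 * m + 1 by omega)
      rw [show 2 * m + 1 - (m + 1) = m by omega] at this
      omega
    have hdouble : Nat.centralBinom (m + 1) = 2 * (2 * m + 1).choose (m + 1) := by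
      rw [Nat.centralBinom]
      rw [show 2 * (m + 1) = (2 * m + 1) + 1 by ring]
      rw [Nat.choose_succ_succ, ← hsym]
      omega
    have hub := cb_upper (m + 1)
    rw [hdouble] at hub
    push_cast at hub ⊢
    rw [show 2 * (m + 1) = (2 * m + 1) + 1 by ring, pow_succ (4:ℝ)] at hub
    nlinarith [hub, sq_nonneg ((2 * m + 1).choose (m + 1) : ℝ),
      (by positivity : (0:ℝ) < 4 ^ (2 * m + 1))]

lemma endAt0_lower (n : ℕ) (hn : 1 ≤ n) :
    (4 : ℝ) ^ n ≤ ((endAtFinset (2 * n) 0).card : ℝ) * (((n : ℝ) + 1) * (3 * Real.sqrt n)) := by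
  have hadd := endAt_card_add (2 * n) n (by omega) (by omega)
  rw [Nat.sub_self] at hadd
  have haddR : ((endAtFinset (2 * n) 0).card : ℝ) + ((2 * n).choose (n + 1) : ℝ)
      = ((2 * n).choose n : ℝ) := by exact_mod_cast congrArg (Nat.cast : ℕ → ℝ) hadd
  have hident : ((2 * n).choose (n + 1) : ℝ) * ((n : ℝ) + 1) = ((2 * n).choose n : ℝ) * n := by
    have h0 := Nat.choose_succ_right_eq (2 * n) n
    rw [show 2 * n - n = n by omega] at h0
    exact_mod_cast congrArg (Nat.cast : ℕ → ℝ) h0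
  have hcard : ((endAtFinset (2 * n) 0).card : ℝ) * ((n : ℝ) + 1) = ((2 * n).choose n : ℝ) := by
    linear_combination haddR * ((n : ℝ) + 1) - hident
  have hcb : ((2 * n).choose n : ℝ) = (Nat.centralBinom n : ℝ) := by rw [Nat.centralBinom]
  have hlow := cb_lower n
  have hS : (0 : ℝ) ≤ Real.sqrt n := Real.sqrt_nonneg n
  have hSsq : (Real.sqrt n) ^ 2 = (n : ℝ) := Real.sq_sqrt (Nat.cast_nonneg n)
  have hN1 : (1 : ℝ) ≤ (n : ℝ) := by exact_mod_cast hn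
  have hcbpos : (0 : ℝ) ≤ (Nat.centralBinom n : ℝ) := Nat.cast_nonneg _
  have hsq : ((4 : ℝ) ^ n) ^ 2 ≤ ((Nat.centralBinom n : ℝ) * (3 * Real.sqrt n)) ^ 2 := by
    have e1 : ((4 : ℝ) ^ n) ^ 2 = 4 ^ (2 * n) := by
      rw [← pow_mul]; ring_nf
    rw [e1, mul_pow, mul_pow, hSsq]
    nlinarith [hlow, sq_nonneg ((Nat.centralBinom n : ℝ))]
  have hfinal : (4 : ℝ) ^ n ≤ (Nat.centralBinom n : ℝ) * (3 * Real.sqrt n) := by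
    have h1 : (4 : ℝ) ^ n = Real.sqrt (((4 : ℝ) ^ n) ^ 2) := by
      rw [Real.sqrt_sq (by positivity)]
    rw [h1]
    calc Real.sqrt (((4 : ℝ) ^ n) ^ 2) ≤
        Real.sqrt (((Nat.centralBinom n : ℝ) * (3 * Real.sqrt n)) ^ 2) :=
          Real.sqrt_le_sqrt hsq
      _ = (Nat.centralBinom n : ℝ) * (3 * Real.sqrt n) := Real.sqrt_sq (by positivity)
  calc (4 : ℝ) ^ n ≤ (Nat.centralBinom n : ℝ) * (3 * Real.sqrt n) := hfinal
    _ = ((endAtFinset (2 * n) 0).card : ℝ) * ((n : ℝ) + 1) * (3 * Real.sqrt n) := by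
        rw [hcard, hcb]
    _ = ((endAtFinset (2 * n) 0).card : ℝ) * (((n : ℝ) + 1) * (3 * Real.sqrt n)) := by ring

lemma kE_bound (K S : ℝ) (hK : 0 ≤ K) (hS : 1 ≤ S) :
    K * Real.exp (-(K ^ 2 / (32 * S ^ 2))) ≤ 4 * S := by
  have hS0 : (0 : ℝ) < S := by linarith
  set x := K ^ 2 / (32 * S ^ 2) with hx
  have key : K ≤ 4 * S * Real.exp x := by
    have h1 : K ≤ 4 * S * (1 + x) := by
      rw [← sub_nonneg]
      have e : 4 * S * (1 + x) - K = (32 * S ^ 2 + K ^ 2 - 8 * S * K) / (8 * S) := by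
        rw [hx]; field_simp; ring
      rw [e]
      apply div_nonneg _ (by positivity)
      nlinarith [sq_nonneg (K - 4 * S)]
    refine le_trans h1 ?_
    apply mul_le_mul_of_nonneg_left _ (by positivity)
    linarith [Real.add_one_le_exp x]
  have h2 := mul_le_mul_of_nonneg_right key (Real.exp_nonneg (-x))
  rw [mul_assoc, ← Real.exp_add, add_neg_cancel, Real.exp_zero, mul_one] at h2
  exact h2

lemma term_bound (n k m : ℕ) (hn : 1 ≤ n) (hkn : k ≤ 2 * n) (hm : m ≤ k) :
    ((endAtFinset n m).card : ℝ) * ((endAtFinset n (k - m)).card : ℝ) ≤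
      4 * ((k : ℝ) + 1) ^ 2 / (n : ℝ) ^ 2 * (n.choose ((n + 1) / 2) : ℝ) ^ 2 *
        Real.exp (1 - (k : ℝ) ^ 2 / (16 * n)) := by
  have t1 := endAt_bound n m hn
  have t2 := endAt_bound n (k - m) hn
  have hb : ((k - m : ℕ) : ℝ) = (k : ℝ) - m := by
    push_cast [Nat.cast_sub hm]; ring
  set A := (m : ℝ) with hA
  set K := (k : ℝ) with hK
  set N := (n : ℝ) with hN
  set M := (n.choose ((n + 1) / 2) : ℝ) with hM
  have hN1 : (1 : ℝ) ≤ N := by rw [hN]; exact_mod_cast hn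
  have hA0 : 0 ≤ A := Nat.cast_nonneg m
  have hAK : A ≤ K := by rw [hA, hK]; exact_mod_cast hm
  have hKN : K ≤ 2 * N := by rw [hK, hN]; exact_mod_cast hkn
  have hM0 : 0 ≤ M := Nat.cast_nonneg _
  rw [hb] at t2
  have hprod : ((endAtFinset n m).card : ℝ) * ((endAtFinset n (k - m)).card : ℝ) ≤
      (2 * (A + 1) / N * M * Real.exp ((-A ^ 2 / 4 + A / 2) / (N + 1))) *
      (2 * ((K - A) + 1) / N * M *
        Real.exp ((-(K - A) ^ 2 / 4 + (K - A) / 2) / (N + 1))) := by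
    apply mul_le_mul t1 t2 (Nat.cast_nonneg _) (by positivity)
  refine le_trans hprod ?_
  have hexparg : (-A ^ 2 / 4 + A / 2) / (N + 1) + (-(K - A) ^ 2 / 4 + (K - A) / 2) / (N + 1)
      ≤ 1 - K ^ 2 / (16 * N) := by
    rw [← add_div]
    rw [div_le_iff₀ (by positivity : (0:ℝ) < N + 1)]
    have hX : K ^ 2 / (16 * N) * (16 * N) = K ^ 2 := by field_simp
    have hXle : K ^ 2 / (16 * N) ≤ K ^ 2 / 16 :=
      div_le_div_of_nonneg_left (sq_nonneg K) (by norm_num) (by linarith)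
    nlinarith [sq_nonneg (2 * A - K), hX, hXle, sq_nonneg K]
  have hcoef : (A + 1) * ((K - A) + 1) ≤ (K + 1) ^ 2 := by nlinarith
  calc (2 * (A + 1) / N * M * Real.exp ((-A ^ 2 / 4 + A / 2) / (N + 1))) *
      (2 * ((K - A) + 1) / N * M *
        Real.exp ((-(K - A) ^ 2 / 4 + (K - A) / 2) / (N + 1)))
      = 4 * ((A + 1) * ((K - A) + 1)) / N ^ 2 * M ^ 2 *
        Real.exp ((-A ^ 2 / 4 + A / 2) / (N + 1) +
          (-(K - A) ^ 2 / 4 + (K - A) / 2) / (N + 1)) := by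
        rw [Real.exp_add]; ring
    _ ≤ 4 * (K + 1) ^ 2 / N ^ 2 * M ^ 2 * Real.exp (1 - K ^ 2 / (16 * N)) := by
        apply mul_le_mul _ (Real.exp_le_exp.mpr hexparg) (Real.exp_nonneg _) (by positivity)
        gcongr

set_option maxHeartbeats 1000000 in
/-- There are constants `C, C₀ > 0` such that for `n ≥ 1` and even `k` with
`4 C₀ √n ≤ k ≤ 2n`, one has `T̃_{2n}^k ≤ C (k²/n) exp(-C₀ k²/n) T_{2n}^0`. -/
theorem strip_path_count_le :
    ∃ C C0 : ℝ, 0 < C ∧ 0 < C0 ∧ ∀ (n : ℕ), 1 ≤ n → ∀ k : ℕ, Even k →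
      4 * C0 * Real.sqrt n ≤ (k : ℝ) → k ≤ 2 * n →
      ((stripFinset (2 * n) k).card : ℝ) ≤
        C * ((k : ℝ) ^ 2 / n) * Real.exp (-(C0 * (k : ℝ) ^ 2 / n)) *
          (endAtFinset (2 * n) 0).card := by
  refine ⟨2000, 1 / 32, by norm_num, by norm_num, ?_⟩
  intro n hn k _ hklow hkup
  set N := (n : ℝ) with hNdef
  set K := (k : ℝ) with hKdef
  set S := Real.sqrt N with hSdef
  set M := (n.choose ((n + 1) / 2) : ℝ) with hMdef
  set T := ((endAtFinset (2 * n) 0).card : ℝ) with hTdef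
  set E := Real.exp (-(K ^ 2 / (32 * N))) with hEdef
  have hN1 : (1 : ℝ) ≤ N := by rw [hNdef]; exact_mod_cast hn
  have hS1 : (1 : ℝ) ≤ S := by
    rw [hSdef]
    rw [show (1:ℝ) = Real.sqrt 1 by rw [Real.sqrt_one]]
    exact Real.sqrt_le_sqrt hN1
  have hSsq : S ^ 2 = N := Real.sq_sqrt (by linarith)
  have hKpos : (0 : ℝ) < K := by
    calc (0:ℝ) < 4 * (1/32) * S := by linarith
    _ ≤ K := hklow
  have hk1 : 1 ≤ k := by
    by_contra hc
    push_neg at hc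
    interval_cases k
    · simp [hKdef] at hKpos
  have hK1 : (1 : ℝ) ≤ K := by rw [hKdef]; exact_mod_cast hk1
  have hKN : K ≤ 2 * N := by rw [hKdef, hNdef]; exact_mod_cast hkup
  have hT0 : 0 ≤ T := Nat.cast_nonneg _
  have hEpos : 0 < E := Real.exp_pos _
  -- sum bound
  have hsum : ((stripFinset (2 * n) k).card : ℝ) ≤
      ∑ m ∈ Finset.range (k + 1),
        ((endAtFinset n m).card : ℝ) * ((endAtFinset n (k - m)).card : ℝ) := by
    have h0 := strip_card_le_sum n k
    calc ((stripFinset (2 * n) k).card : ℝ)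
        ≤ ((∑ m ∈ Finset.range (k + 1),
            (endAtFinset n m).card * (endAtFinset n (k - m)).card : ℕ) : ℝ) := by
          exact_mod_cast h0
      _ = _ := by push_cast; ring
  have hterm : ∀ m ∈ Finset.range (k + 1),
      ((endAtFinset n m).card : ℝ) * ((endAtFinset n (k - m)).card : ℝ) ≤
        4 * (K + 1) ^ 2 / N ^ 2 * M ^ 2 * Real.exp (1 - K ^ 2 / (16 * N)) := by
    intro m hm
    rw [Finset.mem_range] at hm
    exact term_bound n k m hn hkup (by omega)
  have hsum2 : ∑ m ∈ Finset.range (k + 1),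
      ((endAtFinset n m).card : ℝ) * ((endAtFinset n (k - m)).card : ℝ) ≤
        (K + 1) * (4 * (K + 1) ^ 2 / N ^ 2 * M ^ 2 * Real.exp (1 - K ^ 2 / (16 * N))) := by
    calc _ ≤ ∑ _m ∈ Finset.range (k + 1),
          4 * (K + 1) ^ 2 / N ^ 2 * M ^ 2 * Real.exp (1 - K ^ 2 / (16 * N)) :=
        Finset.sum_le_sum hterm
      _ = ((k + 1 : ℕ) : ℝ) * (4 * (K + 1) ^ 2 / N ^ 2 * M ^ 2 *
            Real.exp (1 - K ^ 2 / (16 * N))) := by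
          rw [Finset.sum_const, Finset.card_range, nsmul_eq_mul]
      _ = (K + 1) * _ := by push_cast; ring
  -- auxiliary bounds
  have hM2 : M ^ 2 ≤ 3 * S * T := by
    have h1 := M_sq_bound n
    have h2 := endAt0_lower n hn
    rw [← hMdef] at h1
    rw [← hTdef, ← hNdef, ← hSdef] at h2
    nlinarith [h1, h2, hN1, sq_nonneg M]
  have hexpsplit : Real.exp (1 - K ^ 2 / (16 * N)) = Real.exp 1 * E * E := by
    rw [hEdef, ← Real.exp_add, ← Real.exp_add]
    congr 1
    ring
  have hexp1 : Real.exp 1 ≤ 3 := by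
    have := Real.exp_one_lt_d9
    linarith
  have hKE : K * E ≤ 4 * S := by
    have := kE_bound K S (by linarith) hS1
    rw [hSsq] at this
    rw [hEdef]
    exact this
  have hK3 : (K + 1) ^ 3 ≤ 8 * K ^ 3 := by nlinarith [hK1, sq_nonneg K]
  have hgoalE : Real.exp (-(1 / 32 * K ^ 2 / N)) = E := by
    rw [hEdef]
    congr 1
    ring
  rw [hgoalE]
  calc ((stripFinset (2 * n) k).card : ℝ)
      ≤ (K + 1) * (4 * (K + 1) ^ 2 / N ^ 2 * M ^ 2 * Real.exp (1 - K ^ 2 / (16 * N))) :=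
        le_trans hsum hsum2
    _ = 4 * (K + 1) ^ 3 * M ^ 2 * Real.exp 1 * E * E / N ^ 2 := by
        rw [hexpsplit]; ring
    _ ≤ 4 * (8 * K ^ 3) * (3 * S * T) * 3 * E * E / N ^ 2 := by
        gcongr
    _ = 288 * (K ^ 2 * (K * E)) * S * T * E / N ^ 2 := by ring
    _ ≤ 288 * (K ^ 2 * (4 * S)) * S * T * E / N ^ 2 := by
        gcongr
    _ = 1152 * (K ^ 2 * S ^ 2) * T * E / N ^ 2 := by ring
    _ = 1152 * (K ^ 2 / N) * E * T := by
        rw [hSsq]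
        field_simp
    _ ≤ 2000 * (K ^ 2 / N) * E * T := by
        have hpos : (0:ℝ) ≤ (K ^ 2 / N) * E * T := by positivity
        nlinarith [hpos]

end
end
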